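/- For every finite sets P₁, P₂ ⊆ ℤ^n there exists a finite set P ⊆ ℤ^n such that P₁* ∩ P₂* = P*. Moreover, for every b₁, b₂ ∈ ℤ^n there exists a finite set B ⊆ ℤ^n such that (b₁ + P₁*) ∩ (b₂ + P₂*) = B + (P₁* ∩ P₂*). -/

import Mathlib

open scoped Pointwise

section Aux

variable {ι : Type*} [Fintype ι]

lemma pi_nat_isPWO (s : Set (ι → ℕ)) : s.IsPWO :=
  Set.isPWO_of_wellQuasiOrderedLE s

lemma exists_min_le {S : Set (ι → ℕ)} {u : ι → ℕ} (hu : u ∈ S) :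
    ∃ v ∈ S, v ≤ u ∧ ∀ w ∈ S, w ≤ v → w = v := by
  classical
  have main : ∀ N : ℕ, ∀ u ∈ S, ∑ i, u i ≤ N →
      ∃ v ∈ S, v ≤ u ∧ ∀ w ∈ S, w ≤ v → w = v := by
    intro N
    induction N with
    | zero =>
      intro u hu hN
      refine ⟨u, hu, le_refl _, fun w hw hwu => ?_⟩
      have hsum : ∑ i, u i = 0 := Nat.le_zero.mp hN
      have hu0 : ∀ i, u i = 0 := by
        intro i
        exact (Finset.sum_eq_zero_iff.mp hsum) i (Finset.mem_univ i)
      funext i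
      have h1 : w i ≤ u i := hwu i
      have h2 := hu0 i
      omega
    | succ N ih =>
      intro u hu hN
      by_cases h : ∀ w ∈ S, w ≤ u → w = u
      · exact ⟨u, hu, le_refl _, h⟩
      · push_neg at h
        obtain ⟨w, hw, hwu, hne⟩ := h
        have hlt : ∑ i, w i < ∑ i, u i := by
          have hle : ∑ i, w i ≤ ∑ i, u i :=
            Finset.sum_le_sum fun i _ => hwu i
          rcases lt_or_eq_of_le hle with h' | h'
          · exact h'
          · exfalso
            apply hne
            funext i
            by_contra hne2
            have hi : w i < u i := lt_of_le_of_ne (hwu i) hne2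
            have := Finset.sum_lt_sum (fun j _ => hwu j) ⟨i, Finset.mem_univ i, hi⟩
            omega
        obtain ⟨v, hv, hvw, hmin⟩ := ih w hw (by omega)
        exact ⟨v, hv, le_trans hvw hwu, hmin⟩
  exact main (∑ i, u i) u hu (le_refl _)

lemma monoid_gen (M : Set (ι → ℕ))
    (hsub : ∀ u ∈ M, ∀ v ∈ M, v ≤ u → u - v ∈ M) :
    ∃ F : Finset (ι → ℕ), ↑F ⊆ M ∧
      ∀ u ∈ M, u ∈ AddSubmonoid.closure (F : Set (ι → ℕ)) := by
  classical
  set Fs : Set (ι → ℕ) :=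
    {m | m ∈ M ∧ m ≠ 0 ∧ ∀ w ∈ M, w ≤ m → w = 0 ∨ w = m} with hFs
  have hanti : IsAntichain (· ≤ ·) Fs := by
    intro a ha b hb hne hab
    rcases hb.2.2 a ha.1 hab with h | h
    · exact ha.2.1 h
    · exact hne h
  have hfin : Fs.Finite :=
    hanti.finite_of_partiallyWellOrderedOn (pi_nat_isPWO Fs)
  refine ⟨hfin.toFinset, by simp only [Set.Finite.coe_toFinset]; exact fun x hx => hx.1, ?_⟩
  rw [Set.Finite.coe_toFinset]
  have main : ∀ N : ℕ, ∀ u ∈ M, ∑ i, u i ≤ N → u ∈ AddSubmonoid.closure Fs := by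
    intro N
    induction N with
    | zero =>
      intro u hu hN
      have : u = 0 := by
        funext i
        exact (Finset.sum_eq_zero_iff.mp (Nat.le_zero.mp hN)) i (Finset.mem_univ i)
      rw [this]; exact zero_mem _
    | succ N ih =>
      intro u hu hN
      by_cases h0 : u = 0
      · rw [h0]; exact zero_mem _
      · obtain ⟨v, hv, hvu, hmin⟩ :=
          exists_min_le (S := {v | v ∈ M ∧ v ≠ 0 ∧ v ≤ u}) ⟨hu, h0, le_refl u⟩
        have hvFs : v ∈ Fs := by
          refine ⟨hv.1, hv.2.1, fun w hw hwv => ?_⟩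
          by_cases hw0 : w = 0
          · exact Or.inl hw0
          · exact Or.inr (hmin w ⟨hw, hw0, le_trans hwv hv.2.2⟩ hwv)
        have hsumv : 0 < ∑ i, v i := by
          rcases Nat.eq_zero_or_pos (∑ i, v i) with h | h
          · exfalso; apply hv.2.1
            funext i
            exact (Finset.sum_eq_zero_iff.mp h) i (Finset.mem_univ i)
          · exact h
        have huv : u - v ∈ M := hsub u hu v hv.1 hv.2.2
        have hsum : ∑ i, (u - v) i + ∑ i, v i = ∑ i, u i := by
          rw [← Finset.sum_add_distrib]
          exact Finset.sum_congr rfl fun i _ => Nat.sub_add_cancel (hv.2.2 i)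
        have hle : ∑ i, (u - v) i ≤ N := by omega
        have h1 : u - v ∈ AddSubmonoid.closure Fs := ih (u - v) huv hle
        have h2 : u = (u - v) + v :=
          funext fun i => (Nat.sub_add_cancel (hv.2.2 i)).symm
        rw [h2]
        exact add_mem h1 (AddSubmonoid.subset_closure hvFs)
  exact fun u hu => main (∑ i, u i) u hu (le_refl _)

lemma coset_decomp (M T : Set (ι → ℕ))
    (hsub : ∀ t ∈ T, ∀ t' ∈ T, t' ≤ t → t - t' ∈ M)
    (hadd : ∀ t ∈ T, ∀ m ∈ M, t + m ∈ T) :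
    ∃ B : Finset (ι → ℕ), ↑B ⊆ T ∧ T = ↑B + M := by
  classical
  set Bs : Set (ι → ℕ) := {t | t ∈ T ∧ ∀ w ∈ T, w ≤ t → w = t} with hBs
  have hanti : IsAntichain (· ≤ ·) Bs := by
    intro a ha b hb hne hab
    exact hne (hb.2 a ha.1 hab)
  have hfin : Bs.Finite :=
    hanti.finite_of_partiallyWellOrderedOn (pi_nat_isPWO Bs)
  refine ⟨hfin.toFinset, by simp only [Set.Finite.coe_toFinset]; exact fun x hx => hx.1, ?_⟩
  rw [Set.Finite.coe_toFinset]
  ext t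
  constructor
  · intro ht
    obtain ⟨b, hb, hbt, hmin⟩ := exists_min_le (S := T) ht
    have hbBs : b ∈ Bs := ⟨hb, hmin⟩
    refine ⟨b, hbBs, t - b, hsub t ht b hb hbt, ?_⟩
    funext i
    exact (Nat.add_sub_cancel' (hbt i))
  · rintro ⟨b, hb, m, hm, rfl⟩
    exact hadd b hb.1 m hm


end Aux

lemma mem_closure_finset {A : Type*} [AddCommMonoid A] [DecidableEq A] (Q : Finset A) (w : A) :
    w ∈ AddSubmonoid.closure (Q : Set A) ↔
      ∃ x : {a // a ∈ Q} → ℕ, ∑ i : {a // a ∈ Q}, x i • (i : A) = w := by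
  classical
  constructor
  · intro hw
    induction hw using AddSubmonoid.closure_induction with
    | mem a ha =>
      refine ⟨fun i => if i = ⟨a, ha⟩ then 1 else 0, ?_⟩
      rw [Finset.sum_eq_single (⟨a, ha⟩ : {a // a ∈ Q})]
      · simp
      · intro b _ hb; simp [hb]
      · simp
    | zero =>
      exact ⟨0, by simp⟩
    | add u v _ _ hu hv =>
      obtain ⟨x, hx⟩ := hu
      obtain ⟨y, hy⟩ := hv
      refine ⟨x + y, ?_⟩
      rw [← hx, ← hy, ← Finset.sum_add_distrib]
      exact Finset.sum_congr rfl fun i _ => by simp [add_smul]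
  · rintro ⟨x, rfl⟩
    exact AddSubmonoid.sum_mem _ fun i _ =>
      AddSubmonoid.nsmul_mem _ (AddSubmonoid.subset_closure (Finset.mem_coe.mpr i.2)) (x i)

theorem stmt10 {n : ℕ} (P₁ P₂ : Finset (Fin n → ℤ)) :
    (∃ P : Finset (Fin n → ℤ),
      (AddSubmonoid.closure (P₁ : Set (Fin n → ℤ)) : Set (Fin n → ℤ)) ∩
        (AddSubmonoid.closure (P₂ : Set (Fin n → ℤ)) : Set (Fin n → ℤ)) =
      (AddSubmonoid.closure (P : Set (Fin n → ℤ)) : Set (Fin n → ℤ))) ∧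
    ∀ b₁ b₂ : Fin n → ℤ, ∃ B : Finset (Fin n → ℤ),
      (b₁ +ᵥ (AddSubmonoid.closure (P₁ : Set (Fin n → ℤ)) : Set (Fin n → ℤ))) ∩
        (b₂ +ᵥ (AddSubmonoid.closure (P₂ : Set (Fin n → ℤ)) : Set (Fin n → ℤ))) =
      (B : Set (Fin n → ℤ)) +
        ((AddSubmonoid.closure (P₁ : Set (Fin n → ℤ)) : Set (Fin n → ℤ)) ∩
          (AddSubmonoid.closure (P₂ : Set (Fin n → ℤ)) : Set (Fin n → ℤ))) := by
  classical
  -- index type and evaluation homomorphisms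
  set ι : Type := {a // a ∈ P₁} ⊕ {a // a ∈ P₂} with hι
  let E₁ : (ι → ℕ) →+ (Fin n → ℤ) :=
    AddMonoidHom.mk' (fun x => ∑ i : {a // a ∈ P₁}, x (Sum.inl i) • (i : Fin n → ℤ))
      (by
        intro a b
        rw [← Finset.sum_add_distrib]
        exact Finset.sum_congr rfl fun i _ => by simp [add_smul])
  let E₂ : (ι → ℕ) →+ (Fin n → ℤ) :=
    AddMonoidHom.mk' (fun x => ∑ i : {a // a ∈ P₂}, x (Sum.inr i) • (i : Fin n → ℤ))
      (by
        intro a b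
        rw [← Finset.sum_add_distrib]
        exact Finset.sum_congr rfl fun i _ => by simp [add_smul])
  have hdiff : ∀ (F : (ι → ℕ) →+ (Fin n → ℤ)) (u v : ι → ℕ), v ≤ u →
      F (u - v) = F u - F v := by
    intro F u v h
    have huv : u - v + v = u := funext fun i => Nat.sub_add_cancel (h i)
    have := map_add F (u - v) v
    rw [huv] at this
    rw [this]
    abel
  have hM1 : ∀ w : Fin n → ℤ,
      w ∈ AddSubmonoid.closure (P₁ : Set (Fin n → ℤ)) ↔ ∃ x : ι → ℕ, E₁ x = w := by
    intro w
    rw [mem_closure_finset]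
    constructor
    · rintro ⟨x0, rfl⟩
      refine ⟨Sum.elim x0 (fun _ => 0), ?_⟩
      show (∑ i : {a // a ∈ P₁}, (Sum.elim x0 (fun _ => 0)) (Sum.inl i) • (i : Fin n → ℤ)) = _
      simp
    · rintro ⟨x, rfl⟩
      exact ⟨fun i => x (Sum.inl i), rfl⟩
  have hM2 : ∀ w : Fin n → ℤ,
      w ∈ AddSubmonoid.closure (P₂ : Set (Fin n → ℤ)) ↔ ∃ x : ι → ℕ, E₂ x = w := by
    intro w
    rw [mem_closure_finset]
    constructor
    · rintro ⟨x0, rfl⟩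
      refine ⟨Sum.elim (fun _ => 0) x0, ?_⟩
      show (∑ i : {a // a ∈ P₂}, (Sum.elim (fun _ => 0) x0) (Sum.inr i) • (i : Fin n → ℤ)) = _
      simp
    · rintro ⟨x, rfl⟩
      exact ⟨fun i => x (Sum.inr i), rfl⟩
  set M : Set (ι → ℕ) := {x | E₁ x = E₂ x} with hMdef
  -- the intersection is the image of M
  have hInter : ∀ w : Fin n → ℤ,
      (w ∈ AddSubmonoid.closure (P₁ : Set (Fin n → ℤ)) ∧
        w ∈ AddSubmonoid.closure (P₂ : Set (Fin n → ℤ))) ↔ ∃ x ∈ M, E₁ x = w := by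
    intro w
    constructor
    · rintro ⟨h1, h2⟩
      obtain ⟨x₁, hx₁⟩ := (hM1 w).mp h1
      obtain ⟨x₂, hx₂⟩ := (hM2 w).mp h2
      refine ⟨Sum.elim (fun i => x₁ (Sum.inl i)) (fun j => x₂ (Sum.inr j)), ?_, ?_⟩
      · show E₁ _ = E₂ _
        have e1 : E₁ (Sum.elim (fun i => x₁ (Sum.inl i)) (fun j => x₂ (Sum.inr j))) = E₁ x₁ := by
          show (∑ i : {a // a ∈ P₁}, _ • (i : Fin n → ℤ)) = ∑ i : {a // a ∈ P₁}, _
          simp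
        have e2 : E₂ (Sum.elim (fun i => x₁ (Sum.inl i)) (fun j => x₂ (Sum.inr j))) = E₂ x₂ := by
          show (∑ i : {a // a ∈ P₂}, _ • (i : Fin n → ℤ)) = ∑ i : {a // a ∈ P₂}, _
          simp
        rw [e1, e2, hx₁, hx₂]
      · show E₁ _ = w
        have e1 : E₁ (Sum.elim (fun i => x₁ (Sum.inl i)) (fun j => x₂ (Sum.inr j))) = E₁ x₁ := by
          show (∑ i : {a // a ∈ P₁}, _ • (i : Fin n → ℤ)) = ∑ i : {a // a ∈ P₁}, _
          simp
        rw [e1, hx₁]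
    · rintro ⟨x, hx, rfl⟩
      refine ⟨(hM1 _).mpr ⟨x, rfl⟩, (hM2 _).mpr ⟨x, ?_⟩⟩
      exact hx.symm
  have hsubM : ∀ u ∈ M, ∀ v ∈ M, v ≤ u → u - v ∈ M := by
    intro u hu v hv hle
    show E₁ (u - v) = E₂ (u - v)
    rw [hdiff E₁ u v hle, hdiff E₂ u v hle]
    have h1 : E₁ u = E₂ u := hu
    have h2 : E₁ v = E₂ v := hv
    rw [h1, h2]
  obtain ⟨F, hFM, hFgen⟩ := monoid_gen M hsubM
  constructor
  · -- part 1
    refine ⟨F.image (⇑E₁), ?_⟩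
    ext w
    simp only [Set.mem_inter_iff, SetLike.mem_coe]
    constructor
    · intro hw
      obtain ⟨x, hxM, rfl⟩ := (hInter w).mp hw
      have h1 : E₁ x ∈ AddSubmonoid.map E₁ (AddSubmonoid.closure (F : Set (ι → ℕ))) :=
        AddSubmonoid.mem_map_of_mem E₁ (hFgen x hxM)
      rw [AddMonoidHom.map_mclosure] at h1
      rwa [Finset.coe_image]
    · intro hw
      have hle : AddSubmonoid.closure ((F.image (⇑E₁) : Finset (Fin n → ℤ)) : Set (Fin n → ℤ)) ≤
          AddSubmonoid.closure (P₁ : Set (Fin n → ℤ)) ⊓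
            AddSubmonoid.closure (P₂ : Set (Fin n → ℤ)) := by
        rw [AddSubmonoid.closure_le]
        intro p hp
        simp only [Finset.coe_image, Set.mem_image, Finset.mem_coe] at hp
        obtain ⟨f, hf, rfl⟩ := hp
        have hfM : f ∈ M := hFM hf
        exact AddSubmonoid.mem_inf.mpr ((hInter (E₁ f)).mpr ⟨f, hfM, rfl⟩)
      exact AddSubmonoid.mem_inf.mp (hle hw)
  · -- part 2
    intro b₁ b₂
    set T : Set (ι → ℕ) := {x | b₁ + E₁ x = b₂ + E₂ x} with hTdef
    have hsubT : ∀ t ∈ T, ∀ t' ∈ T, t' ≤ t → t - t' ∈ M := by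
      intro t ht t' ht' hle
      show E₁ (t - t') = E₂ (t - t')
      rw [hdiff E₁ t t' hle, hdiff E₂ t t' hle]
      have h1 : b₁ + E₁ t = b₂ + E₂ t := ht
      have h2 : b₁ + E₁ t' = b₂ + E₂ t' := ht'
      linear_combination h1 - h2
    have haddT : ∀ t ∈ T, ∀ m ∈ M, t + m ∈ T := by
      intro t ht m hm
      show b₁ + E₁ (t + m) = b₂ + E₂ (t + m)
      rw [map_add, map_add]
      have h1 : b₁ + E₁ t = b₂ + E₂ t := ht
      have h2 : E₁ m = E₂ m := hm
      linear_combination h1 + h2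
    obtain ⟨B₀, hB₀T, hT⟩ := coset_decomp M T hsubT haddT
    refine ⟨B₀.image (fun x => b₁ + E₁ x), ?_⟩
    ext z
    simp only [Set.mem_inter_iff]
    constructor
    · rintro ⟨hz1, hz2⟩
      obtain ⟨w₁, hw₁, hzw₁⟩ := Set.mem_vadd_set.mp hz1
      obtain ⟨w₂, hw₂, hzw₂⟩ := Set.mem_vadd_set.mp hz2
      obtain ⟨x₁, hx₁⟩ := (hM1 w₁).mp hw₁
      obtain ⟨x₂, hx₂⟩ := (hM2 w₂).mp hw₂
      set c : ι → ℕ := Sum.elim (fun i => x₁ (Sum.inl i)) (fun j => x₂ (Sum.inr j)) with hc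
      have e1 : E₁ c = w₁ := by
        rw [← hx₁]
        show (∑ i : {a // a ∈ P₁}, _ • (i : Fin n → ℤ)) = ∑ i : {a // a ∈ P₁}, _
        simp [hc]
      have e2 : E₂ c = w₂ := by
        rw [← hx₂]
        show (∑ i : {a // a ∈ P₂}, _ • (i : Fin n → ℤ)) = ∑ i : {a // a ∈ P₂}, _
        simp [hc]
      have hcT : c ∈ T := by
        show b₁ + E₁ c = b₂ + E₂ c
        rw [e1, e2]
        rw [← vadd_eq_add, ← vadd_eq_add, hzw₁, hzw₂]
      rw [hT] at hcT
      obtain ⟨b, hb, m, hm, hbm⟩ := hcT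
      refine Set.mem_add.mpr ⟨b₁ + E₁ b, ?_, E₁ m, ?_, ?_⟩
      · simp only [Finset.coe_image, Set.mem_image, Finset.mem_coe]
        exact ⟨b, hb, rfl⟩
      · exact Set.mem_inter ((hM1 _).mpr ⟨m, rfl⟩)
          (by
            have hm' : E₁ m = E₂ m := hm
            rw [hm']
            exact (hM2 _).mpr ⟨m, rfl⟩)
      · have : E₁ c = E₁ b + E₁ m := by rw [← hbm, map_add]
        rw [← hzw₁, vadd_eq_add, ← e1, this]
        ring
    · intro hz
      obtain ⟨p, hp, w, hw, hpw⟩ := Set.mem_add.mp hz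
      simp only [Finset.coe_image, Set.mem_image, Finset.mem_coe] at hp
      obtain ⟨b, hbB₀, rfl⟩ := hp
      obtain ⟨m, hmM, rfl⟩ := (hInter w).mp ⟨hw.1, hw.2⟩
      have hbT : b ∈ T := hB₀T hbB₀
      have htT : b + m ∈ T := haddT b hbT m hmM
      have hz1 : z = b₁ + E₁ (b + m) := by
        rw [← hpw, map_add]
        ring
      have hz2 : z = b₂ + E₂ (b + m) := by
        rw [hz1]
        exact htT
      constructor
      · refine Set.mem_vadd_set.mpr ⟨E₁ (b + m), (hM1 _).mpr ⟨b + m, rfl⟩, ?_⟩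
        rw [vadd_eq_add, ← hz1]
      · refine Set.mem_vadd_set.mpr ⟨E₂ (b + m), (hM2 _).mpr ⟨b + m, rfl⟩, ?_⟩
        rw [vadd_eq_add, ← hz2]
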